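/- Directional stability of the composed quantile map, continuous case (step of Proposition A.3): Let R > 0 and let P, Q be probability measures on ℝ^d supported in the closed ball B̄(0,R) such that for every unit vector u ∈ S^{d−1} the pushforward measures P_u and Q_u of P and Q under x ↦ ⟨u,x⟩ are atomless and have supports that are intervals. Then for all unit vectors u, v ∈ S^{d−1}: ∫_{−R}^{R} |F_{Q,v}^{-1}(F_{P,u}(x)) − F_{Q,v}^{-1}(F_{P,v}(x))| dx ≤ 2R²·‖u − v‖₂. -/

import Mathlib

open MeasureTheory Set

/-- The unit sphere `S^{d-1}` in `ℝ^d`. -/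
def sph (d : ℕ) : Set (EuclideanSpace ℝ (Fin d)) :=
  Metric.sphere (0 : EuclideanSpace ℝ (Fin d)) 1

/-- CDF of the projection of `μ` onto direction `u`. -/
noncomputable def projCDF {d : ℕ} (μ : Measure (EuclideanSpace ℝ (Fin d)))
    (u : EuclideanSpace ℝ (Fin d)) (x : ℝ) : ℝ :=
  (μ {y | (inner ℝ u y : ℝ) ≤ x}).toReal

/-- Quantile function of the projection of `μ` onto direction `u`:
`F_{μ,u}^{-1}(t) = inf {x ∈ [-R,R] : F_{μ,u}(x) ≥ t}`. -/
noncomputable def projQuantile {d : ℕ} (R : ℝ) (μ : Measure (EuclideanSpace ℝ (Fin d)))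
    (u : EuclideanSpace ℝ (Fin d)) (t : ℝ) : ℝ :=
  sInf {x : ℝ | x ∈ Set.Icc (-R) R ∧ t ≤ projCDF μ u x}

/-- Topological support of a measure on `ℝ`. -/
def msupp (μ : Measure ℝ) : Set ℝ := {x | ∀ ε > (0 : ℝ), 0 < μ (Metric.ball x ε)}

section Helpers

variable {d : ℕ} {μ : Measure (EuclideanSpace ℝ (Fin d))} [IsProbabilityMeasure μ]
  {w : EuclideanSpace ℝ (Fin d)} {R : ℝ}

lemma projCDF_nonneg (x : ℝ) : 0 ≤ projCDF μ w x := ENNReal.toReal_nonneg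

lemma projCDF_le_one (x : ℝ) : projCDF μ w x ≤ 1 := by
  have h : μ {y | (inner ℝ w y : ℝ) ≤ x} ≤ 1 := prob_le_one
  simpa [projCDF] using ENNReal.toReal_mono ENNReal.one_ne_top h

lemma projCDF_mono : Monotone (projCDF μ w) := fun a b hab =>
  ENNReal.toReal_mono (measure_ne_top μ _) (measure_mono fun y hy => le_trans hy hab)

lemma projCDF_R_one (hμ : μ (Metric.closedBall 0 R) = 1) (hw : ‖w‖ = 1) {x : ℝ} (hx : R ≤ x) :
    projCDF μ w x = 1 := by
  have hsub : Metric.closedBall (0 : EuclideanSpace ℝ (Fin d)) R ⊆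
      {y | (inner ℝ w y : ℝ) ≤ x} := by
    intro y hy
    have h1 : (inner ℝ w y : ℝ) ≤ ‖w‖ * ‖y‖ := real_inner_le_norm w y
    have h2 : ‖y‖ ≤ R := by simpa [Metric.mem_closedBall, dist_zero_right] using hy
    have : (inner ℝ w y : ℝ) ≤ x := by rw [hw] at h1; linarith
    exact this
  have h : μ {y | (inner ℝ w y : ℝ) ≤ x} = 1 :=
    le_antisymm prob_le_one (hμ ▸ measure_mono hsub)
  unfold projCDF
  rw [h, ENNReal.toReal_one]

lemma projCDF_shift (hμ : μ (Metric.closedBall 0 R) = 1)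
    (u v : EuclideanSpace ℝ (Fin d)) (x : ℝ) :
    projCDF μ v x ≤ projCDF μ u (x + R * ‖u - v‖) := by
  have hc : μ (Metric.closedBall (0 : EuclideanSpace ℝ (Fin d)) R)ᶜ = 0 := by
    rw [measure_compl measurableSet_closedBall (measure_ne_top _ _), hμ, measure_univ,
      tsub_self]
  have hsub : {y : EuclideanSpace ℝ (Fin d) | (inner ℝ v y : ℝ) ≤ x} ⊆
      {y | (inner ℝ u y : ℝ) ≤ x + R * ‖u - v‖} ∪ (Metric.closedBall 0 R)ᶜ := by
    intro y hy
    by_cases hyB : y ∈ Metric.closedBall (0 : EuclideanSpace ℝ (Fin d)) R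
    · left
      have h1 : (inner ℝ (u - v) y : ℝ) ≤ ‖u - v‖ * ‖y‖ := real_inner_le_norm _ _
      have h2 : ‖y‖ ≤ R := by simpa [Metric.mem_closedBall, dist_zero_right] using hyB
      have h3 : (inner ℝ u y : ℝ) = (inner ℝ v y : ℝ) + (inner ℝ (u - v) y : ℝ) := by
        rw [inner_sub_left]; ring
      have h4 : ‖u - v‖ * ‖y‖ ≤ R * ‖u - v‖ := by nlinarith [norm_nonneg (u - v)]
      have hy' : (inner ℝ v y : ℝ) ≤ x := hy
      show (inner ℝ u y : ℝ) ≤ x + R * ‖u - v‖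
      linarith
    · right; exact hyB
  have hle := (measure_mono (μ := μ) hsub).trans (measure_union_le _ _)
  rw [hc, add_zero] at hle
  unfold projCDF
  exact ENNReal.toReal_mono (measure_ne_top μ _) hle

end Helpers

section Quantile

variable {d : ℕ} {μ : Measure (EuclideanSpace ℝ (Fin d))} [IsProbabilityMeasure μ]
  {w : EuclideanSpace ℝ (Fin d)} {R : ℝ}

lemma quantile_set_nonempty (hR : 0 < R) (hμ : μ (Metric.closedBall 0 R) = 1) (hw : ‖w‖ = 1)
    {t : ℝ} (ht1 : t ≤ 1) :
    R ∈ {x : ℝ | x ∈ Set.Icc (-R) R ∧ t ≤ projCDF μ w x} :=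
  ⟨⟨by linarith, le_refl R⟩, by rw [projCDF_R_one hμ hw le_rfl]; exact ht1⟩

lemma quantile_set_bddBelow (t : ℝ) :
    BddBelow {x : ℝ | x ∈ Set.Icc (-R) R ∧ t ≤ projCDF μ w x} :=
  ⟨-R, fun _ hx => hx.1.1⟩

lemma quantile_mem_Icc (hR : 0 < R) (hμ : μ (Metric.closedBall 0 R) = 1) (hw : ‖w‖ = 1)
    {t : ℝ} (ht1 : t ≤ 1) : projQuantile R μ w t ∈ Set.Icc (-R) R := by
  constructor
  · exact le_csInf ⟨R, quantile_set_nonempty hR hμ hw ht1⟩ fun x hx => hx.1.1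
  · exact csInf_le (quantile_set_bddBelow t) (quantile_set_nonempty hR hμ hw ht1)

lemma quantile_cdf_ge (hR : 0 < R) (hμ : μ (Metric.closedBall 0 R) = 1) (hw : ‖w‖ = 1)
    {t : ℝ} (ht0 : 0 ≤ t) (ht1 : t ≤ 1) :
    t ≤ projCDF μ w (projQuantile R μ w t) := by
  set S := {x : ℝ | x ∈ Set.Icc (-R) R ∧ t ≤ projCDF μ w x} with hS
  have hne : S.Nonempty := ⟨R, quantile_set_nonempty hR hμ hw ht1⟩
  set c := sInf S with hc
  have key : ENNReal.ofReal t ≤ μ {y | (inner ℝ w y : ℝ) ≤ c} := by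
    set A : ℕ → Set (EuclideanSpace ℝ (Fin d)) :=
      fun n => {y | (inner ℝ w y : ℝ) ≤ c + 1 / (n + 1)} with hA
    have hmW : Measurable fun y : EuclideanSpace ℝ (Fin d) => (inner ℝ w y : ℝ) :=
      (continuous_const.inner continuous_id).measurable
    have hmeas : ∀ n, NullMeasurableSet (A n) μ := fun n =>
      (hmW measurableSet_Iic).nullMeasurableSet
    have hanti : Antitone A := by
      intro n m hnm y hy
      have h1 : (1 : ℝ) / (m + 1) ≤ 1 / (n + 1) := by
        apply one_div_le_one_div_of_le (by positivity)
        have : (n : ℝ) ≤ m := by exact_mod_cast hnm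
        linarith
      have hy' : (inner ℝ w y : ℝ) ≤ c + 1 / (m + 1) := hy
      show (inner ℝ w y : ℝ) ≤ c + 1 / (n + 1)
      linarith
    have hiInter : ⋂ n, A n = {y | (inner ℝ w y : ℝ) ≤ c} := by
      ext y
      simp only [hA, Set.mem_iInter, Set.mem_setOf_eq]
      constructor
      · intro h
        refine le_of_forall_pos_le_add fun ε hε => ?_
        obtain ⟨n, hn⟩ := exists_nat_one_div_lt hε
        have := h n
        linarith
      · intro h n
        have : (0 : ℝ) < 1 / (n + 1) := by positivity
        linarith
    have htend := tendsto_measure_iInter_atTop (μ := μ) hmeas hanti ⟨0, measure_ne_top _ _⟩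
    rw [hiInter] at htend
    refine ge_of_tendsto htend (Filter.Eventually.of_forall fun n => ?_)
    obtain ⟨x, hxS, hxlt⟩ := Real.lt_sInf_add_pos hne (show (0:ℝ) < 1 / (n + 1) by positivity)
    have h1 : ENNReal.ofReal t ≤ μ {y | (inner ℝ w y : ℝ) ≤ x} :=
      ENNReal.ofReal_le_of_le_toReal hxS.2
    refine h1.trans (measure_mono fun y hy => ?_)
    exact le_trans hy hxlt.le
  have h2 := ENNReal.toReal_mono (measure_ne_top μ _) key
  rw [ENNReal.toReal_ofReal ht0] at h2
  exact h2

lemma quantile_le_iff (hR : 0 < R) (hμ : μ (Metric.closedBall 0 R) = 1) (hw : ‖w‖ = 1)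
    {t : ℝ} (ht0 : 0 ≤ t) (ht1 : t ≤ 1) {s : ℝ} (hs : s ∈ Set.Icc (-R) R) :
    projQuantile R μ w t ≤ s ↔ t ≤ projCDF μ w s := by
  constructor
  · intro h
    exact (quantile_cdf_ge hR hμ hw ht0 ht1).trans (projCDF_mono h)
  · intro h
    exact csInf_le (quantile_set_bddBelow t) ⟨hs, h⟩

lemma quantile_mono (hR : 0 < R) (hμ : μ (Metric.closedBall 0 R) = 1) (hw : ‖w‖ = 1)
    {t₁ t₂ : ℝ} (h : t₁ ≤ t₂) (ht1 : t₂ ≤ 1) :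
    projQuantile R μ w t₁ ≤ projQuantile R μ w t₂ := by
  apply csInf_le_csInf (quantile_set_bddBelow t₁) ⟨R, quantile_set_nonempty hR hμ hw ht1⟩
  intro x hx
  exact ⟨hx.1, h.trans hx.2⟩

end Quantile


/-- Directional stability of the composed quantile map, continuous case. -/
theorem composed_quantile_directional_stability_continuous
    (d : ℕ) (hd : 1 ≤ d) (R : ℝ) (hR : 0 < R)
    (P Q : Measure (EuclideanSpace ℝ (Fin d)))
    [IsProbabilityMeasure P] [IsProbabilityMeasure Q]
    (hP : P (Metric.closedBall 0 R) = 1) (hQ : Q (Metric.closedBall 0 R) = 1)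
    (hPa : ∀ u ∈ sph d, ∀ a : ℝ, (Measure.map (fun y => (inner ℝ u y : ℝ)) P) {a} = 0)
    (hQa : ∀ u ∈ sph d, ∀ a : ℝ, (Measure.map (fun y => (inner ℝ u y : ℝ)) Q) {a} = 0)
    (hPs : ∀ u ∈ sph d, (msupp (Measure.map (fun y => (inner ℝ u y : ℝ)) P)).OrdConnected)
    (hQs : ∀ u ∈ sph d, (msupp (Measure.map (fun y => (inner ℝ u y : ℝ)) Q)).OrdConnected) :
    ∀ u ∈ sph d, ∀ v ∈ sph d,
      ∫ x in (-R)..R,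
          |projQuantile R Q v (projCDF P u x) - projQuantile R Q v (projCDF P v x)| ≤
        2 * R ^ 2 * ‖u - v‖ := by
  intro u hu v hv
  have hu1 : ‖u‖ = 1 := by simpa using mem_sphere_zero_iff_norm.mp hu
  have hv1 : ‖v‖ = 1 := by simpa using mem_sphere_zero_iff_norm.mp hv
  set δ := R * ‖u - v‖ with hδdef
  have hδ0 : 0 ≤ δ := mul_nonneg hR.le (norm_nonneg _)
  set g : ℝ → ℝ := fun x => projQuantile R Q v (projCDF P u x) with hgdef
  set h : ℝ → ℝ := fun x => projQuantile R Q v (projCDF P v x) with hhdef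
  set ν : Measure ℝ := volume.restrict (Set.Ioc (-R) R) with hνdef
  haveI hνfin : IsFiniteMeasure ν := by
    constructor
    rw [hνdef, Measure.restrict_apply_univ, Real.volume_Ioc]
    exact ENNReal.ofReal_lt_top
  have hgIcc : ∀ x, g x ∈ Set.Icc (-R) R := fun x =>
    quantile_mem_Icc hR hQ hv1 (projCDF_le_one x)
  have hhIcc : ∀ x, h x ∈ Set.Icc (-R) R := fun x =>
    quantile_mem_Icc hR hQ hv1 (projCDF_le_one x)
  have hgm : Monotone g := fun a b hab =>
    quantile_mono hR hQ hv1 (projCDF_mono hab) (projCDF_le_one b)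
  have hhm : Monotone h := fun a b hab =>
    quantile_mono hR hQ hv1 (projCDF_mono hab) (projCDF_le_one b)
  set K : ℝ → ℝ → ℝ := fun x s =>
    |(if g x ≤ s then (1:ℝ) else 0) - (if h x ≤ s then (1:ℝ) else 0)| with hKdef
  have hKm : Measurable (Function.uncurry K) := by
    have m1 : MeasurableSet {p : ℝ × ℝ | g p.1 ≤ p.2} :=
      measurableSet_le (hgm.measurable.comp measurable_fst) measurable_snd
    have m2 : MeasurableSet {p : ℝ × ℝ | h p.1 ≤ p.2} :=
      measurableSet_le (hhm.measurable.comp measurable_fst) measurable_snd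
    exact ((Measurable.ite m1 measurable_const measurable_const).sub
      (Measurable.ite m2 measurable_const measurable_const)).abs
  have hKbd : ∀ p : ℝ × ℝ, ‖Function.uncurry K p‖ ≤ 1 := by
    rintro ⟨x, s⟩
    by_cases h1 : g x ≤ s <;> by_cases h2 : h x ≤ s <;>
      simp [Function.uncurry, hKdef, h1, h2]
  have hKint : Integrable (Function.uncurry K) (ν.prod ν) :=
    Integrable.mono' (integrable_const 1) hKm.aestronglyMeasurable
      (Filter.Eventually.of_forall hKbd)
  have I1 : Integrable (fun x => |g x - h x|) ν := by
    refine Integrable.mono' (integrable_const (2*R))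
      ((hgm.measurable.sub hhm.measurable).abs).aestronglyMeasurable
      (Filter.Eventually.of_forall fun x => ?_)
    rw [Real.norm_eq_abs, abs_abs]
    have h1 := hgIcc x; have h2 := hhIcc x
    exact abs_le.mpr ⟨by linarith [h1.1, h2.2], by linarith [h1.2, h2.1]⟩
  have I3 : Integrable (fun x => ∫ s, K x s ∂ν) ν := hKint.integral_prod_left
  have I4 : Integrable (fun s => ∫ x, K x s ∂ν) ν := hKint.integral_prod_right
  have key2 : ∀ a b : ℝ, a ∈ Set.Icc (-R) R → b ∈ Set.Icc (-R) R → a ≤ b →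
      b - a ≤ ∫ s, |(if a ≤ s then (1:ℝ) else 0) - (if b ≤ s then (1:ℝ) else 0)| ∂ν := by
    intro a b ha hb hab
    have hsub : Set.Ioo a b ⊆ Set.Ioc (-R) R := fun s hs =>
      ⟨lt_of_le_of_lt ha.1 hs.1, hs.2.le.trans hb.2⟩
    have hind : ∀ s, (Set.Ioo a b).indicator (fun _ => (1:ℝ)) s ≤
        |(if a ≤ s then (1:ℝ) else 0) - (if b ≤ s then (1:ℝ) else 0)| := by
      intro s
      by_cases hs : s ∈ Set.Ioo a b
      · rw [Set.indicator_of_mem hs, if_pos hs.1.le, if_neg (not_le.2 hs.2)]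
        norm_num
      · rw [Set.indicator_of_notMem hs]
        positivity
    have hI : ∫ s, (Set.Ioo a b).indicator (fun _ => (1:ℝ)) s ∂ν = b - a := by
      rw [integral_indicator measurableSet_Ioo, hνdef,
        Measure.restrict_restrict measurableSet_Ioo,
        Set.inter_eq_self_of_subset_left hsub]
      simp [Real.volume_Ioo, ENNReal.toReal_ofReal (sub_nonneg.2 hab), hab]
    rw [← hI]
    refine integral_mono ((integrable_const 1).indicator measurableSet_Ioo) ?_ hind
    refine Integrable.mono' (integrable_const 1) ?_
      (Filter.Eventually.of_forall fun s => ?_)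
    · exact ((Measurable.ite measurableSet_Ici measurable_const measurable_const).sub
        (Measurable.ite measurableSet_Ici measurable_const measurable_const)).abs.aestronglyMeasurable
    · rw [Real.norm_eq_abs, abs_abs]
      by_cases h1 : a ≤ s <;> by_cases h2 : b ≤ s <;> simp [h1, h2]
  have step2 : ∀ x, |g x - h x| ≤ ∫ s, K x s ∂ν := by
    intro x
    rcases le_total (g x) (h x) with hc | hc
    · rw [abs_of_nonpos (by linarith), neg_sub]
      exact key2 (g x) (h x) (hgIcc x) (hhIcc x) hc
    · rw [abs_of_nonneg (by linarith)]
      have hk := key2 (h x) (g x) (hhIcc x) (hgIcc x) hc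
      calc g x - h x
          ≤ ∫ s, |(if h x ≤ s then (1:ℝ) else 0) - (if g x ≤ s then (1:ℝ) else 0)| ∂ν := hk
        _ = ∫ s, K x s ∂ν := by
            congr 1; funext s; rw [hKdef]; exact abs_sub_comm _ _
  have kuv : ∀ z : ℝ, projCDF P v z ≤ projCDF P u (z + δ) := fun z => projCDF_shift hP u v z
  have kvu : ∀ z : ℝ, projCDF P u z ≤ projCDF P v (z + δ) := by
    intro z
    have h' := projCDF_shift hP v u z
    rwa [norm_sub_rev, ← hδdef] at h'
  have inner_bound : ∀ s ∈ Set.Ioc (-R) R, ∫ x, K x s ∂ν ≤ δ := by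
    intro s hs
    have hsIcc : s ∈ Set.Icc (-R) R := ⟨hs.1.le, hs.2⟩
    set t : ℝ := projCDF Q v s with htdef
    have hiffu : ∀ x, g x ≤ s ↔ projCDF P u x ≤ t := fun x =>
      quantile_le_iff hR hQ hv1 (projCDF_nonneg x) (projCDF_le_one x) hsIcc
    have hiffv : ∀ x, h x ≤ s ↔ projCDF P v x ≤ t := fun x =>
      quantile_le_iff hR hQ hv1 (projCDF_nonneg x) (projCDF_le_one x) hsIcc
    set D : Set ℝ := {x | ¬ (projCDF P u x ≤ t ↔ projCDF P v x ≤ t)} with hDdef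
    have hAmeas : MeasurableSet {x | projCDF P u x ≤ t} :=
      (projCDF_mono (μ := P) (w := u)).measurable measurableSet_Iic
    have hBmeas : MeasurableSet {x | projCDF P v x ≤ t} :=
      (projCDF_mono (μ := P) (w := v)).measurable measurableSet_Iic
    have hDmeas : MeasurableSet D := by
      have heq : D = ({x | projCDF P u x ≤ t} \ {x | projCDF P v x ≤ t}) ∪
          ({x | projCDF P v x ≤ t} \ {x | projCDF P u x ≤ t}) := by
        ext x
        simp only [hDdef, Set.mem_union, Set.mem_diff, Set.mem_setOf_eq]
        tauto
      rw [heq]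
      exact (hAmeas.diff hBmeas).union (hBmeas.diff hAmeas)
    have hKind : (fun x => K x s) = D.indicator (fun _ => (1:ℝ)) := by
      funext x
      by_cases h1 : projCDF P u x ≤ t <;> by_cases h2 : projCDF P v x ≤ t <;>
        simp [hKdef, hiffu x, hiffv x, h1, h2, hDdef, Set.indicator, Set.mem_setOf_eq]
    have hdiam : ∀ x ∈ D, ∀ y ∈ D, x ≤ y → y ≤ x + δ := by
      intro x hx y hy hxy
      simp only [hDdef, Set.mem_setOf_eq] at hx hy
      by_cases h1 : projCDF P u x ≤ t <;> by_cases h2 : projCDF P v x ≤ t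
      · exact absurd (iff_of_true h1 h2) hx
      · -- x in A
        by_cases h3 : projCDF P u y ≤ t <;> by_cases h4 : projCDF P v y ≤ t
        · exact absurd (iff_of_true h3 h4) hy
        · -- y in A
          by_contra hcon
          push_neg at hcon
          have m1 : projCDF P u (x + δ) ≤ projCDF P u y := projCDF_mono hcon.le
          have m2 := kuv x
          have h2' := not_le.1 h2
          linarith
        · -- y in B : contradiction via v-monotonicity
          have m := projCDF_mono (μ := P) (w := v) hxy
          have h2' := not_le.1 h2
          linarith
        · exact absurd (iff_of_false h3 h4) hy
      · -- x in B
        by_cases h3 : projCDF P u y ≤ t <;> by_cases h4 : projCDF P v y ≤ t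
        · exact absurd (iff_of_true h3 h4) hy
        · -- y in A : contradiction via u-monotonicity
          have m := projCDF_mono (μ := P) (w := u) hxy
          have h1' := not_le.1 h1
          linarith
        · -- y in B
          by_contra hcon
          push_neg at hcon
          have m1 : projCDF P v (x + δ) ≤ projCDF P v y := projCDF_mono hcon.le
          have m2 := kvu x
          have h1' := not_le.1 h1
          linarith
        · exact absurd (iff_of_false h3 h4) hy
      · exact absurd (iff_of_false h1 h2) hx
    have hmeasD : ν D ≤ ENNReal.ofReal δ := by
      rw [hνdef, Measure.restrict_apply hDmeas]
      by_cases hne : (D ∩ Set.Ioc (-R) R).Nonempty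
      · have hbdd : BddBelow (D ∩ Set.Ioc (-R) R) := ⟨-R, fun z hz => hz.2.1.le⟩
        set c := sInf (D ∩ Set.Ioc (-R) R) with hcdef
        have hsub2 : D ∩ Set.Ioc (-R) R ⊆ Set.Icc c (c + δ) := by
          intro x hx
          refine ⟨csInf_le hbdd hx, ?_⟩
          have hxc : x - δ ≤ c := by
            refine le_csInf hne fun z hz => ?_
            rcases le_total x z with hxz | hzx
            · linarith
            · have := hdiam z hz.1 x hx.1 hzx
              linarith
          linarith
        calc volume (D ∩ Set.Ioc (-R) R) ≤ volume (Set.Icc c (c + δ)) := measure_mono hsub2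
          _ = ENNReal.ofReal δ := by rw [Real.volume_Icc]; congr 1; ring
      · rw [Set.not_nonempty_iff_eq_empty] at hne
        rw [hne]
        simp
    calc ∫ x, K x s ∂ν = ∫ x, D.indicator (fun _ => (1:ℝ)) x ∂ν := by rw [hKind]
      _ = ∫ x in D, (1:ℝ) ∂ν := integral_indicator hDmeas
      _ = (ν D).toReal • (1:ℝ) := setIntegral_const 1
      _ = (ν D).toReal := by rw [smul_eq_mul, mul_one]
      _ ≤ δ := ENNReal.toReal_le_of_le_ofReal hδ0 hmeasD
  have hRR : -R ≤ R := by linarith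
  rw [intervalIntegral.integral_of_le hRR]
  calc ∫ x in Set.Ioc (-R) R, |g x - h x| ∂volume
      = ∫ x, |g x - h x| ∂ν := by rw [hνdef]
    _ ≤ ∫ x, (∫ s, K x s ∂ν) ∂ν := integral_mono I1 I3 step2
    _ = ∫ s, (∫ x, K x s ∂ν) ∂ν := integral_integral_swap hKint
    _ ≤ ∫ s, δ ∂ν := by
        refine integral_mono_ae I4 (integrable_const δ) ?_
        have hae : ∀ᵐ s ∂ν, s ∈ Set.Ioc (-R) R := by
          rw [hνdef]
          exact ae_restrict_mem measurableSet_Ioc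
        exact hae.mono fun s hs => inner_bound s hs
    _ = 2 * R ^ 2 * ‖u - v‖ := by
        rw [integral_const, hνdef, measureReal_def, Measure.restrict_apply_univ, Real.volume_Ioc,
          ENNReal.toReal_ofReal (by linarith), smul_eq_mul, hδdef]
        ring
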